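/- arXiv:1804.11096 — 3 statements merged into one kernel-verified Lean document; each statement's English description precedes it below -/
import Mathlib

section
/- The map j sending the upper triangular matrix with rows (a, c, e), (0, 1/(ab), d), (0, 0, b) to the 4×4 matrix with rows (a/b, -2a²d, c/b, 4e/b - 2acd), (0, a²b, 0, abc), (0, 0, 1/(ab²), 2d/b), (0, 0, 0, 1) is a group homomorphism from the Borel subgroup B of SL(3,C) to GL(4,C). -/
set_option maxHeartbeats 1000000


open Matrix

/-- The Borel subgroup `B ⊂ SL(3,ℂ)`: upper triangular complex `3 × 3` matrices of
determinant one, i.e. matrices with rows `(a, c, e), (0, 1/(ab), d), (0, 0, b)`. -/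
def BorelB : Set (Matrix (Fin 3) (Fin 3) ℂ) :=
  {M | M.BlockTriangular id ∧ M.det = 1}

/-- The map `j` of the paper, written in terms of the entries
`a = M₀₀, c = M₀₁, e = M₀₂, d = M₁₂, b = M₂₂` of an upper triangular matrix `M`. -/
noncomputable def Jmap (M : Matrix (Fin 3) (Fin 3) ℂ) : Matrix (Fin 4) (Fin 4) ℂ :=
  let a := M 0 0; let c := M 0 1; let e := M 0 2; let d := M 1 2; let b := M 2 2
  !![a / b, -2 * a ^ 2 * d, c / b, 4 * e / b - 2 * a * c * d;
     0, a ^ 2 * b, 0, a * b * c;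
     0, 0, 1 / (a * b ^ 2), 2 * d / b;
     0, 0, 0, 1]

lemma borel_rep {M : Matrix (Fin 3) (Fin 3) ℂ} (h : M ∈ BorelB) :
    ∃ a b c d e : ℂ, a ≠ 0 ∧ b ≠ 0 ∧
      M = !![a, c, e; 0, 1 / (a * b), d; 0, 0, b] := by
  obtain ⟨ht, hd⟩ := h
  have h10 : M 1 0 = 0 := ht (show id (0:Fin 3) < id 1 by decide)
  have h20 : M 2 0 = 0 := ht (show id (0:Fin 3) < id 2 by decide)
  have h21 : M 2 1 = 0 := ht (show id (1:Fin 3) < id 2 by decide)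
  rw [Matrix.det_fin_three] at hd
  simp only [h10, h20, h21, mul_zero, zero_mul, sub_zero, add_zero, zero_sub, neg_zero] at hd
  have ha : M 0 0 ≠ 0 := by intro z; rw [z] at hd; simp at hd
  have hb : M 2 2 ≠ 0 := by intro z; rw [z] at hd; simp at hd
  refine ⟨M 0 0, M 2 2, M 0 1, M 1 2, M 0 2, ha, hb, ?_⟩
  have h11 : M 1 1 = 1 / (M 0 0 * M 2 2) := by
    field_simp; linear_combination hd
  ext i j
  fin_cases i <;> fin_cases j <;>
    simp [h10, h20, h21, h11, Matrix.vecHead, Matrix.vecTail]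

lemma Jmap_explicit (a b c d e x : ℂ) :
    Jmap !![a, c, e; 0, x, d; 0, 0, b] =
      !![a / b, -2 * a ^ 2 * d, c / b, 4 * e / b - 2 * a * c * d;
         0, a ^ 2 * b, 0, a * b * c;
         0, 0, 1 / (a * b ^ 2), 2 * d / b;
         0, 0, 0, 1] := by
  simp [Jmap]

/-- `j` is a group homomorphism from the Borel subgroup `B` of `SL(3,ℂ)`
to `GL(4,ℂ)`: it takes values in invertible matrices and is multiplicative. -/
theorem Jmap_hom :
    (∀ M ∈ BorelB, IsUnit (Jmap M)) ∧
    (Jmap 1 = 1) ∧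
    (∀ M ∈ BorelB, ∀ N ∈ BorelB, Jmap (M * N) = Jmap M * Jmap N) := by

  refine ⟨?_, ?_, ?_⟩
  · intro M hM
    obtain ⟨a, b, c, d, e, ha, hb, rfl⟩ := borel_rep hM
    rw [Matrix.isUnit_iff_isUnit_det, isUnit_iff_ne_zero, Jmap_explicit]
    simp [Matrix.det_succ_row_zero, Fin.sum_univ_succ]
    try field_simp
    try tauto
  · have h1 : (1 : Matrix (Fin 3) (Fin 3) ℂ) = !![1, 0, 0; 0, 1, 0; 0, 0, 1] := by
      ext i j
      fin_cases i <;> fin_cases j <;>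
        simp [Matrix.one_apply, Matrix.vecHead, Matrix.vecTail, Fin.ext_iff]
    rw [h1, Jmap_explicit]
    ext i j
    fin_cases i <;> fin_cases j
    all_goals try simp [Matrix.one_apply, Matrix.vecHead, Matrix.vecTail, Fin.ext_iff]
    all_goals exact (if_neg (by decide)).symm
  · intro M hM N hN
    obtain ⟨a, b, c, d, e, ha, hb, rfl⟩ := borel_rep hM
    obtain ⟨a', b', c', d', e', ha', hb', rfl⟩ := borel_rep hN
    have hMN : !![a, c, e; 0, 1 / (a * b), d; 0, 0, b] *
        !![a', c', e'; 0, 1 / (a' * b'), d'; 0, 0, b'] =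
        !![a * a', a * c' + c / (a' * b'), a * e' + c * d' + e * b';
           0, 1 / (a * a' * (b * b')), d' / (a * b) + d * b';
           0, 0, b * b'] := by
      ext i j
      fin_cases i <;> fin_cases j
      all_goals try simp [Matrix.mul_apply, Fin.sum_univ_three, Matrix.vecHead, Matrix.vecTail]
      all_goals try field_simp
      all_goals first | ring1 | (left; ring1) | tauto
    rw [hMN, Jmap_explicit, Jmap_explicit, Jmap_explicit]
    ext i j
    fin_cases i <;> fin_cases j
    all_goals try simp [Matrix.mul_apply, Fin.sum_univ_four, Matrix.vecHead, Matrix.vecTail]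
    all_goals try field_simp
    all_goals first
      | ring1
      | (left; ring1)
      | (rw [eq_div_iff (by simp [mul_ne_zero_iff, pow_ne_zero_iff, ha, hb, ha', hb'])]; ring1)
      | tauto
end

section
/- The kernel of the homomorphism j : B → GL(4,C) (defined by sending the matrix with rows (a,c,e),(0,1/(ab),d),(0,0,b) to the matrix with rows (a/b, -2a²d, c/b, 4e/b - 2acd), (0, a²b, 0, abc), (0, 0, 1/(ab²), 2d/b), (0,0,0,1)) consists exactly of the diagonal matrices diag(ζ, ζ, ζ) with ζ³ = 1, hence is isomorphic to Z/3Z. -/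
open Matrix

lemma Jmap_smul_one (ζ : ℂ) (hζ : ζ ^ 3 = 1) : Jmap (ζ • 1) = 1 := by
  have hne : ζ ≠ 0 := by rintro rfl; simp at hζ
  ext i j
  fin_cases i <;> fin_cases j <;>
    (try simp [Jmap, Matrix.smul_apply, Matrix.one_apply, Matrix.vecHead, Matrix.vecTail, hne]) <;>
    (try field_simp) <;>
    first
      | linear_combination hζ
      | linear_combination -hζ

lemma smul_one_mem_BorelB (ζ : ℂ) (hζ : ζ ^ 3 = 1) : ζ • (1 : Matrix (Fin 3) (Fin 3) ℂ) ∈ BorelB := by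
  constructor
  · intro i j hij
    have : i ≠ j := fun h => by subst h; exact lt_irrefl _ hij
    simp [Matrix.smul_apply, Matrix.one_apply_ne this]
  · rw [Matrix.det_smul, Matrix.det_one]
    simpa using hζ

lemma Jmap_kernel_iff (M : Matrix (Fin 3) (Fin 3) ℂ) (hM : M ∈ BorelB) :
    Jmap M = 1 ↔ ∃ ζ : ℂ, ζ ^ 3 = 1 ∧ M = ζ • (1 : Matrix (Fin 3) (Fin 3) ℂ) := by
  obtain ⟨htri, hdet⟩ := hM
  constructor
  · intro h
    have h00 := congr_fun (congr_fun h 0) 0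
    have h01 := congr_fun (congr_fun h 0) 1
    have h02 := congr_fun (congr_fun h 0) 2
    have h03 := congr_fun (congr_fun h 0) 3
    have h11 := congr_fun (congr_fun h 1) 1
    have h13 := congr_fun (congr_fun h 1) 3
    have h23 := congr_fun (congr_fun h 2) 3
    simp [Jmap, Matrix.one_apply] at h00 h01 h02 h03 h11 h13 h23
    set a := M 0 0 with ha
    set c := M 0 1 with hc
    set e := M 0 2 with he
    set d := M 1 2 with hd
    set b := M 2 2 with hb
    have hane : a ≠ 0 := by
      rintro h0; rw [h0] at h11; simp at h11
    have hbne : b ≠ 0 := by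
      rintro h0; rw [h0] at h11; simp at h11
    have hab : a = b := by
      field_simp at h00; exact h00
    have ha3 : a ^ 3 = 1 := by
      rw [← hab] at h11; linear_combination h11
    have hd0 : d = 0 := by
      rcases h01 with h' | h'
      · exact absurd h' hane
      · exact h'
    have hc0 : c = 0 := by
      rcases h13 with (h' | h') | h'
      · exact absurd h' hane
      · exact absurd h' hbne
      · exact h'
    have he0 : e = 0 := by
      rw [hc0, hd0] at h03
      field_simp at h03
      simpa using h03
    have hdet' : a * M 1 1 * b = 1 := by
      rw [Matrix.det_of_upperTriangular htri, Fin.prod_univ_three] at hdet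
      exact hdet
    have hm11 : M 1 1 = a := by
      have : a * M 1 1 * a = a ^ 3 := by rw [ha3]; rw [← hab] at hdet'; exact hdet'
      have h2 : M 1 1 * a ^ 2 = a * a ^ 2 := by ring_nf; ring_nf at this; linear_combination this
      exact mul_right_cancel₀ (pow_ne_zero 2 hane) h2
    refine ⟨a, ha3, ?_⟩
    ext i j
    fin_cases i <;> fin_cases j <;>
      (try simp [Matrix.smul_apply, Matrix.one_apply]) <;>
      first
        | exact hc0
        | exact he0
        | exact hd0
        | exact hm11
        | exact hab.symm
        | (apply htri; decide)
        | rfl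
  · rintro ⟨ζ, hζ, rfl⟩
    exact Jmap_smul_one ζ hζ

/-- The kernel of `j : B → GL(4,ℂ)` consists exactly of the scalar matrices
`diag(ζ, ζ, ζ)` with `ζ³ = 1`; hence it is isomorphic to `ℤ/3ℤ`. -/
theorem Jmap_kernel :
    (∀ M ∈ BorelB, (Jmap M = 1 ↔
      ∃ ζ : ℂ, ζ ^ 3 = 1 ∧ M = ζ • (1 : Matrix (Fin 3) (Fin 3) ℂ))) ∧
    Nonempty ({M : Matrix (Fin 3) (Fin 3) ℂ // M ∈ BorelB ∧ Jmap M = 1} ≃ ZMod 3) := by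
  refine ⟨fun M hM => Jmap_kernel_iff M hM, ?_⟩
  have e1 : {M : Matrix (Fin 3) (Fin 3) ℂ // M ∈ BorelB ∧ Jmap M = 1} ≃ {ζ : ℂ // ζ ^ 3 = 1} :=
    { toFun := fun x => ⟨x.1 0 0, by
        obtain ⟨ζ, hζ, hEq⟩ := (Jmap_kernel_iff x.1 x.2.1).1 x.2.2
        rw [hEq]; simpa using hζ⟩
      invFun := fun z => ⟨z.1 • 1, smul_one_mem_BorelB z.1 z.2, Jmap_smul_one z.1 z.2⟩
      left_inv := fun x => by
        apply Subtype.ext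
        obtain ⟨ζ, hζ, hEq⟩ := (Jmap_kernel_iff x.1 x.2.1).1 x.2.2
        simp only [hEq]
        congr 1
        simp
      right_inv := fun z => by
        apply Subtype.ext
        simp }
  have hprim : IsPrimitiveRoot (Complex.exp (2 * Real.pi * Complex.I / 3)) 3 :=
    Complex.isPrimitiveRoot_exp 3 (by norm_num)
  have e2 : {ζ : ℂ // ζ ^ 3 = 1} ≃ (Polynomial.nthRootsFinset 3 (1 : ℂ)) :=
    Equiv.subtypeEquivRight fun x =>
      (Polynomial.mem_nthRootsFinset (by norm_num : 0 < 3) (1 : ℂ)).symm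
  have hcard : Fintype.card (Polynomial.nthRootsFinset 3 (1 : ℂ)) = 3 := by
    rw [Fintype.card_coe, hprim.card_nthRootsFinset]
  exact ⟨e1.trans (e2.trans (Fintype.equivOfCardEq (by rw [hcard, ZMod.card])))⟩
end

section
/- The image of the homomorphism j : B → GL(4,C) is exactly the group H of matrices with rows (λ, v¹λ, v²λ, s), (0, a¹, 0, a¹v²), (0, 0, a², -a²v¹), (0, 0, 0, 1) with a¹a² = λ, i.e., j is surjective onto H. -/
open Matrix

def Hset : Set (Matrix (Fin 4) (Fin 4) ℂ) :=
  {M | ∃ s v1 v2 a1 a2 : ℂ, a1 ≠ 0 ∧ a2 ≠ 0 ∧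
    M = !![a1 * a2, v1 * (a1 * a2), v2 * (a1 * a2), s;
           0, a1, 0, a1 * v2;
           0, 0, a2, -(a2 * v1);
           0, 0, 0, 1]}

lemma Jmap_apply (a c e x d b : ℂ) :
    Jmap !![a, c, e; 0, x, d; 0, 0, b] =
    !![a / b, -2 * a ^ 2 * d, c / b, 4 * e / b - 2 * a * c * d;
       0, a ^ 2 * b, 0, a * b * c;
       0, 0, 1 / (a * b ^ 2), 2 * d / b;
       0, 0, 0, 1] := by
  unfold Jmap
  rfl

lemma form_eq (a b c d e : ℂ) (ha : a ≠ 0) (hb : b ≠ 0) :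
    !![a / b, -2 * a ^ 2 * d, c / b, 4 * e / b - 2 * a * c * d;
       0, a ^ 2 * b, 0, a * b * c;
       0, 0, 1 / (a * b ^ 2), 2 * d / b;
       0, 0, 0, 1] =
    !![(a ^ 2 * b) * (1 / (a * b ^ 2)),
       (-2 * a * b * d) * ((a ^ 2 * b) * (1 / (a * b ^ 2))),
       (c / a) * ((a ^ 2 * b) * (1 / (a * b ^ 2))),
       4 * e / b - 2 * a * c * d;
       0, a ^ 2 * b, 0, (a ^ 2 * b) * (c / a);
       0, 0, 1 / (a * b ^ 2), -((1 / (a * b ^ 2)) * (-2 * a * b * d));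
       0, 0, 0, 1] := by
  ext i j
  fin_cases i <;> fin_cases j <;> simp <;> field_simp <;> ring

lemma mem_BorelB (a c e x d b : ℂ) (h : a * x * b = 1) :
    !![a, c, e; 0, x, d; 0, 0, b] ∈ BorelB := by
  constructor
  · intro i j hij
    fin_cases i <;> fin_cases j <;> first | rfl | exact absurd hij (by decide)
  · rw [Matrix.det_fin_three]
    simp [Matrix.vecHead, Matrix.vecTail]
    linear_combination h

/-- The image of `j : B → GL(4,ℂ)` is exactly the group `H`; in particular `j` is
surjective onto `H`. -/
theorem Jmap_image_eq_Hset :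
    ∀ X : Matrix (Fin 4) (Fin 4) ℂ, X ∈ Hset ↔ ∃ M ∈ BorelB, Jmap M = X := by
  intro X
  constructor
  · rintro ⟨s, v1, v2, a1, a2, ha1, ha2, rfl⟩
    obtain ⟨t, ht⟩ := IsAlgClosed.exists_pow_nat_eq (k := ℂ) (a1 / a2) (n := 3) (by norm_num)
    have ht0 : t ≠ 0 := by
      have h3 : t ^ 3 ≠ 0 := ht ▸ div_ne_zero ha1 ha2
      exact fun h => h3 (by rw [h]; ring)
    have ht' : t ^ 3 * a2 = a1 := by field_simp at ht; exact ht
    subst ht'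
    obtain ⟨a, b, c, d, e, ha, hb, e1, e2, e3, e4, e5⟩ :
        ∃ a b c d e : ℂ, a ≠ 0 ∧ b ≠ 0 ∧ a ^ 2 * b = t ^ 3 * a2 ∧ 1 / (a * b ^ 2) = a2 ∧
          -2 * a * b * d = v1 ∧ c / a = v2 ∧ 4 * e / b - 2 * a * c * d = s := by
      refine ⟨t ^ 2 * a2, 1 / (t * a2), t ^ 2 * a2 * v2, -v1 / (2 * t),
        (s - t ^ 3 * a2 ^ 2 * v2 * v1) / (4 * t * a2),
        mul_ne_zero (pow_ne_zero 2 ht0) ha2,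
        one_div_ne_zero (mul_ne_zero ht0 ha2), ?_, ?_, ?_, ?_, ?_⟩
      · field_simp
      · field_simp
      · field_simp
      · field_simp
      · field_simp; ring
    refine ⟨!![a, c, e; 0, 1 / (a * b), d; 0, 0, b],
      mem_BorelB a c e (1 / (a * b)) d b (by field_simp), ?_⟩
    rw [Jmap_apply, form_eq a b c d e ha hb, e1, e2, e3, e4, e5]
  · rintro ⟨M, ⟨htri, hdet⟩, rfl⟩
    have h10 : M 1 0 = 0 := htri (by decide)
    have h20 : M 2 0 = 0 := htri (by decide)
    have h21 : M 2 1 = 0 := htri (by decide)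
    rw [Matrix.det_fin_three, h10, h20, h21] at hdet
    have hdet' : M 0 0 * M 1 1 * M 2 2 = 1 := by linear_combination hdet
    have ha : M 0 0 ≠ 0 := fun h => by rw [h] at hdet'; simp at hdet'
    have hb : M 2 2 ≠ 0 := fun h => by rw [h] at hdet'; simp at hdet'
    have hM : M = !![M 0 0, M 0 1, M 0 2; 0, M 1 1, M 1 2; 0, 0, M 2 2] := by
      have := Matrix.eta_fin_three M
      rw [h10, h20, h21] at this
      exact this
    rw [congrArg Jmap hM, Jmap_apply, form_eq _ _ _ _ _ ha hb]
    exact ⟨4 * M 0 2 / M 2 2 - 2 * M 0 0 * M 0 1 * M 1 2, -2 * M 0 0 * M 2 2 * M 1 2,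
      M 0 1 / M 0 0, M 0 0 ^ 2 * M 2 2, 1 / (M 0 0 * M 2 2 ^ 2),
      mul_ne_zero (pow_ne_zero 2 ha) hb,
      one_div_ne_zero (mul_ne_zero ha (pow_ne_zero 2 hb)), rfl⟩
end
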